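/- arXiv:2507.16581 — 3 statements merged into one kernel-verified Lean document; each statement's English description precedes it below -/
import Mathlib

section
/- Let u be a non-degenerate, simple integer linear recurrence sequence with exactly two dominant characteristic roots λ₁ and λ₂. Then λ₂ is the complex conjugate of λ₁, the argument of λ₁ is not a rational multiple of π, and |λ₁| > 1. -/
/-- `u` satisfies the linear recurrence of order `d` with coefficients `c 1, …, c d`:
`u (n + d) = c 1 * u (n + d - 1) + ⋯ + c d * u n`. -/
def SatisfiesRec (u : ℕ → ℤ) (c : ℕ → ℤ) (d : ℕ) : Prop :=
  ∀ n : ℕ, u (n + d) = ∑ j ∈ Finset.Icc 1 d, c j * u (n + d - j)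

/-- An integer linear recurrence sequence, given by its (minimal-order) recurrence. -/
structure IntLRS where
  u : ℕ → ℤ
  d : ℕ
  c : ℕ → ℤ
  d_pos : 0 < d
  hrec : SatisfiesRec u c d
  last_ne : c d ≠ 0
  minimal : ∀ d' : ℕ, 0 < d' → d' < d → ∀ c' : ℕ → ℤ, ¬ SatisfiesRec u c' d'

/-- The characteristic polynomial `X^d - c₁ X^{d-1} - ⋯ - c_d`, over `ℂ`. -/
noncomputable def IntLRS.charPoly (L : IntLRS) : Polynomial ℂ :=
  Polynomial.X ^ L.d -
    ∑ j ∈ Finset.Icc 1 L.d, Polynomial.C ((L.c j : ℂ)) * Polynomial.X ^ (L.d - j)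

def IntLRS.IsCharRoot (L : IntLRS) (z : ℂ) : Prop := L.charPoly.IsRoot z

/-- A characteristic root of maximal modulus. -/
def IntLRS.IsDominantRoot (L : IntLRS) (z : ℂ) : Prop :=
  L.IsCharRoot z ∧ ∀ w : ℂ, L.IsCharRoot w → ‖w‖ ≤ ‖z‖

/-- Every characteristic root has multiplicity one. -/
def IntLRS.Simple (L : IntLRS) : Prop :=
  ∀ z : ℂ, L.charPoly.rootMultiplicity z ≤ 1

/-- No quotient of two distinct characteristic roots is a root of unity. -/
def IntLRS.NonDegenerate (L : IntLRS) : Prop :=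
  ∀ z w : ℂ, L.IsCharRoot z → L.IsCharRoot w → z ≠ w →
    ∀ k : ℕ, 0 < k → (z / w) ^ k ≠ 1

/-- The LRS has exactly two dominant characteristic roots. -/
def IntLRS.TwoDominantRoots (L : IntLRS) : Prop :=
  ∃ z w : ℂ, z ≠ w ∧ ∀ x : ℂ, L.IsDominantRoot x ↔ (x = z ∨ x = w)

namespace IntLRS

variable (L : IntLRS)

lemma charPoly_eval (z : ℂ) :
    L.charPoly.eval z = z ^ L.d - ∑ j ∈ Finset.Icc 1 L.d, (L.c j : ℂ) * z ^ (L.d - j) := by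
  simp [charPoly, Polynomial.eval_finset_sum]

lemma isCharRoot_conj {z : ℂ} (h : L.IsCharRoot z) : L.IsCharRoot ((starRingEnd ℂ) z) := by
  unfold IsCharRoot Polynomial.IsRoot at *
  rw [charPoly_eval] at *
  have h2 := congrArg (starRingEnd ℂ) h
  simpa [map_sub, map_pow, map_sum, map_mul] using h2

lemma charPoly_eval_zero : L.charPoly.eval 0 = -(L.c L.d : ℂ) := by
  rw [charPoly_eval]
  rw [Finset.sum_eq_single L.d]
  · simp [zero_pow L.d_pos.ne', Nat.sub_self]
  · intro j hj hjd
    have : 0 < L.d - j := by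
      simp only [Finset.mem_Icc] at hj; omega
    simp [zero_pow this.ne']
  · intro h
    exact absurd (Finset.mem_Icc.mpr ⟨L.d_pos, le_refl _⟩) h

lemma root_ne_zero {z : ℂ} (h : L.IsCharRoot z) : z ≠ 0 := by
  intro hz
  rw [hz] at h
  have h0 := L.charPoly_eval_zero
  rw [h] at h0
  have : (L.c L.d : ℂ) = 0 := by
    have := h0.symm
    rwa [neg_eq_zero] at this
  exact L.last_ne (by exact_mod_cast this)

lemma degree_Q_lt :
    (∑ j ∈ Finset.Icc 1 L.d, Polynomial.C ((L.c j : ℂ)) * Polynomial.X ^ (L.d - j)).degree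
      < (L.d : WithBot ℕ) := by
  apply lt_of_le_of_lt (Polynomial.degree_sum_le _ _)
  rw [Finset.sup_lt_iff (by exact_mod_cast WithBot.bot_lt_coe L.d)]
  intro j hj
  apply lt_of_le_of_lt (Polynomial.degree_C_mul_X_pow_le _ _)
  have : L.d - j < L.d := by simp only [Finset.mem_Icc] at hj; omega
  exact_mod_cast this

lemma charPoly_monic : L.charPoly.Monic :=
  Polynomial.monic_X_pow_sub (L.degree_Q_lt)

lemma charPoly_degree : L.charPoly.degree = L.d := by
  unfold charPoly
  rw [Polynomial.degree_sub_eq_left_of_degree_lt]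
  · exact Polynomial.degree_X_pow L.d
  · rw [Polynomial.degree_X_pow]; exact L.degree_Q_lt

lemma charPoly_natDegree : L.charPoly.natDegree = L.d :=
  Polynomial.natDegree_eq_of_degree_eq_some L.charPoly_degree

end IntLRS
lemma multiset_prod_aux (s : Multiset ℝ) (h : ∀ x ∈ s, 0 ≤ x ∧ x ≤ 1) :
    0 ≤ s.prod ∧ s.prod ≤ 1 := by
  induction s using Multiset.induction_on with
  | empty => simp
  | cons a s ih =>
    obtain ⟨ha0, ha1⟩ := h a (Multiset.mem_cons_self a s)
    obtain ⟨hs0, hs1⟩ := ih (fun x hx => h x (Multiset.mem_cons_of_mem hx))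
    rw [Multiset.prod_cons]
    exact ⟨mul_nonneg ha0 hs0, mul_le_one₀ ha1 hs0 hs1⟩

/-- If a non-degenerate, simple integer LRS has exactly two dominant
characteristic roots `λ₁ ≠ λ₂`, then `λ₂ = conj λ₁`, the argument of `λ₁` is not a
rational multiple of `π`, and `|λ₁| > 1`. -/
theorem stmt_1 (L : IntLRS) (hsimple : L.Simple) (hnondeg : L.NonDegenerate)
    (lam₁ lam₂ : ℂ) (hne : lam₁ ≠ lam₂)
    (hdom : ∀ x : ℂ, L.IsDominantRoot x ↔ (x = lam₁ ∨ x = lam₂)) :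
    lam₂ = (starRingEnd ℂ) lam₁ ∧
      (∀ q : ℚ, Complex.arg lam₁ ≠ (q : ℝ) * Real.pi) ∧
      1 < ‖lam₁‖ := by
  have hdom1 : L.IsDominantRoot lam₁ := (hdom lam₁).mpr (Or.inl rfl)
  have hdom2 : L.IsDominantRoot lam₂ := (hdom lam₂).mpr (Or.inr rfl)
  have hroot1 : L.IsCharRoot lam₁ := hdom1.1
  have hroot2 : L.IsCharRoot lam₂ := hdom2.1
  have hne1 : lam₁ ≠ 0 := L.root_ne_zero hroot1
  have hne2 : lam₂ ≠ 0 := L.root_ne_zero hroot2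
  have habs : ‖lam₂‖ = ‖lam₁‖ :=
    le_antisymm (hdom1.2 lam₂ hroot2) (hdom2.2 lam₁ hroot1)
  -- Part (a): lam₂ = conj lam₁
  have hconjdom : ∀ z : ℂ, L.IsDominantRoot z → L.IsDominantRoot ((starRingEnd ℂ) z) := by
    intro z hz
    refine ⟨L.isCharRoot_conj hz.1, fun w hw => ?_⟩
    rw [Complex.norm_conj]
    exact hz.2 w hw
  have hca : lam₂ = (starRingEnd ℂ) lam₁ := by
    rcases (hdom _).mp (hconjdom lam₁ hdom1) with h1 | h1
    · -- conj lam₁ = lam₁, i.e. lam₁ real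
      rcases (hdom _).mp (hconjdom lam₂ hdom2) with h2 | h2
      · -- conj lam₂ = lam₁ : then lam₂ = conj lam₁ = lam₁, contradiction
        exfalso
        apply hne
        have h3 : lam₂ = (starRingEnd ℂ) lam₁ := by rw [← h2, Complex.conj_conj]
        rw [h3, h1]
      · -- conj lam₂ = lam₂ : both real
        exfalso
        have him1 : lam₁.im = 0 := by
          have := congrArg Complex.im h1
          simp at this; linarith
        have him2 : lam₂.im = 0 := by
          have := congrArg Complex.im h2
          simp at this; linarith
        have hsq : lam₁.re ^ 2 = lam₂.re ^ 2 := by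
          have h1' : ‖lam₁‖ ^ 2 = Complex.normSq lam₁ := Complex.sq_norm lam₁
          have h2' : ‖lam₂‖ ^ 2 = Complex.normSq lam₂ := Complex.sq_norm lam₂
          rw [habs] at h2'
          have h3 := h1'.symm.trans h2'
          simp [Complex.normSq_apply, him1, him2] at h3
          nlinarith [h3]
        have hrene : lam₁.re ≠ lam₂.re := by
          intro h
          exact hne (Complex.ext h (him1.trans him2.symm))
        have hre : lam₂.re = -lam₁.re := by
          rcases mul_eq_zero.mp (show (lam₁.re - lam₂.re) * (lam₁.re + lam₂.re) = 0 by
            nlinarith [hsq]) with h | h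
          · exact absurd (by linarith) hrene
          · linarith
        have hneg : lam₂ = -lam₁ := by
          apply Complex.ext
          · simpa using hre
          · simp [him1, him2]
        have hpow : (lam₁ / lam₂) ^ 2 = 1 := by
          rw [hneg]
          rw [div_neg, div_self hne1]
          norm_num
        exact hnondeg lam₁ lam₂ hroot1 hroot2 hne 2 (by norm_num) hpow
    · exact h1.symm
  refine ⟨hca, ?_, ?_⟩
  -- Part (b): arg lam₁ is not a rational multiple of π
  · intro q hq
    have hr0 : ((‖lam₁‖ : ℝ) : ℂ) ≠ 0 := by
      simpa using norm_ne_zero_iff.mpr hne1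
    have h1 : lam₁ = (‖lam₁‖ : ℂ) * Complex.exp (lam₁.arg * Complex.I) :=
      (Complex.norm_mul_exp_arg_mul_I lam₁).symm
    have hconjexp : (starRingEnd ℂ) (Complex.exp ((lam₁.arg : ℂ) * Complex.I)) =
        Complex.exp (-((lam₁.arg : ℂ) * Complex.I)) := by
      rw [← Complex.exp_conj]
      congr 1
      simp [Complex.conj_ofReal]
    have h2 : lam₂ = (‖lam₁‖ : ℂ) * Complex.exp (-((lam₁.arg : ℂ) * Complex.I)) := by
      rw [hca]
      conv_lhs => rw [h1]
      rw [map_mul, hconjexp, Complex.conj_ofReal]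
    have hratio : lam₁ / lam₂ = Complex.exp (2 * lam₁.arg * Complex.I) := by
      generalize hA : ((‖lam₁‖ : ℝ) : ℂ) = A at h1 h2 hr0
      generalize hT : ((lam₁.arg : ℝ) : ℂ) = T at h1 h2 ⊢
      rw [h1, h2, mul_div_mul_left _ _ hr0, ← Complex.exp_sub]
      congr 1
      ring
    have hq' : ((q.den : ℚ)) * q = (q.num : ℚ) := by
      have hden : (q.den : ℚ) ≠ 0 := by exact_mod_cast q.den_pos.ne'
      have h := (Rat.num_div_den q).symm
      rw [eq_div_iff hden] at h
      linear_combination h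
    have hk : ((lam₁ / lam₂) ^ q.den) = 1 := by
      rw [hratio, ← Complex.exp_nat_mul, Complex.exp_eq_one_iff]
      refine ⟨q.num, ?_⟩
      rw [hq]
      have hqc : ((q.den : ℂ)) * ((q : ℚ) : ℂ) = ((q.num : ℤ) : ℂ) := by exact_mod_cast hq'
      push_cast
      linear_combination (2 * (Real.pi : ℂ) * Complex.I) * hqc
    exact hnondeg lam₁ lam₂ hroot1 hroot2 hne q.den q.den_pos hk
  -- Part (c): 1 < |lam₁|
  · by_contra hle'
    push_neg at hle'
    have hr0 : 0 < ‖lam₁‖ := norm_pos_iff.mpr hne1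
    have hmonic := L.charPoly_monic
    have hP0 : L.charPoly ≠ 0 := hmonic.ne_zero
    have hsplits : L.charPoly.Splits := IsAlgClosed.splits _
    set M := L.charPoly.roots with hM
    have hnodup : M.Nodup := by
      rw [Multiset.nodup_iff_count_le_one]
      intro z
      rw [hM, Polynomial.count_roots]
      exact hsimple z
    have hmem1 : lam₁ ∈ M := by
      rw [hM, Polynomial.mem_roots hP0]; exact hroot1
    have hmem2 : lam₂ ∈ M := by
      rw [hM, Polynomial.mem_roots hP0]; exact hroot2
    have hmem2' : lam₂ ∈ M.erase lam₁ :=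
      (Multiset.mem_erase_of_ne (Ne.symm hne)).mpr hmem2
    set rest := (M.erase lam₁).erase lam₂ with hrest
    have hMeq : M = lam₁ ::ₘ lam₂ ::ₘ rest := by
      rw [hrest, Multiset.cons_erase hmem2', Multiset.cons_erase hmem1]
    have hrestmem : ∀ w ∈ rest, L.IsCharRoot w ∧ ‖w‖ < ‖lam₁‖ := by
      intro w hw
      have hw2 : w ∈ M.erase lam₁ := Multiset.mem_of_mem_erase hw
      have hwM : w ∈ M := Multiset.mem_of_mem_erase hw2
      have hwroot : L.IsCharRoot w := (Polynomial.mem_roots hP0).mp (hM ▸ hwM)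
      have hwne1 : w ≠ lam₁ := by
        intro h; subst h
        exact (Multiset.Nodup.notMem_erase hnodup) hw2
      have hwne2 : w ≠ lam₂ := by
        intro h; subst h
        exact (Multiset.Nodup.notMem_erase (hnodup.erase _)) hw
      refine ⟨hwroot, ?_⟩
      rcases lt_or_eq_of_le (hdom1.2 w hwroot) with h | h
      · exact h
      · exfalso
        have hwd : L.IsDominantRoot w := ⟨hwroot, fun x hx => h ▸ hdom1.2 x hx⟩
        rcases (hdom w).mp hwd with h' | h'
        · exact hwne1 h'
        · exact hwne2 h'
    have hvieta := Polynomial.Splits.coeff_zero_eq_prod_roots_of_monic hsplits hmonic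
    rw [Polynomial.coeff_zero_eq_eval_zero, L.charPoly_eval_zero, L.charPoly_natDegree] at hvieta
    have habs_prod : (M.map (fun z => ‖z‖)).prod = ‖((L.c L.d : ℂ))‖ := by
      have h := congrArg norm hvieta
      rw [norm_neg, norm_mul, norm_pow, norm_neg, norm_one, one_pow,
        one_mul] at h
      rw [h]
      exact (map_multiset_prod (normHom : ℂ →*₀ ℝ) M).symm
    have h1le : (1:ℝ) ≤ ‖((L.c L.d : ℂ))‖ := by
      rw [Complex.norm_intCast]
      have : (1:ℤ) ≤ |L.c L.d| := Int.one_le_abs L.last_ne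
      exact_mod_cast this
    rw [hMeq, Multiset.map_cons, Multiset.map_cons, Multiset.prod_cons, Multiset.prod_cons,
      habs] at habs_prod
    set P := (rest.map (fun z => ‖z‖)).prod with hPdef
    have hPbound := multiset_prod_aux (rest.map (fun z => ‖z‖)) (by
      intro x hx
      obtain ⟨w, hw, rfl⟩ := Multiset.mem_map.mp hx
      obtain ⟨_, hwlt⟩ := hrestmem w hw
      exact ⟨norm_nonneg w, le_trans (le_of_lt hwlt) hle'⟩)
    obtain ⟨hPnn, hPle⟩ := hPbound
    have hr1 : ‖lam₁‖ = 1 := by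
      apply le_antisymm hle'
      nlinarith [habs_prod, h1le, hPnn, hPle, hr0,
        mul_le_mul_of_nonneg_left hPle (mul_nonneg hr0.le hr0.le),
        sq_nonneg (‖lam₁‖ - 1)]
    have hP1 : (1:ℝ) ≤ P := by
      rw [hr1, one_mul, one_mul] at habs_prod
      rw [habs_prod]
      exact h1le
    have hrest0 : rest = 0 := by
      by_contra hne0
      obtain ⟨w, hw⟩ := Multiset.exists_mem_of_ne_zero hne0
      obtain ⟨_, hwlt⟩ := hrestmem w hw
      rw [hr1] at hwlt
      have hw' : ‖w‖ ∈ rest.map (fun z => ‖z‖) :=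
        Multiset.mem_map_of_mem _ hw
      have hP' : P = ‖w‖ * ((rest.map (fun z => ‖z‖)).erase
          (‖w‖)).prod := by
        rw [hPdef, ← Multiset.prod_cons, Multiset.cons_erase hw']
      obtain ⟨hnn', hle''⟩ := multiset_prod_aux ((rest.map (fun z => ‖z‖)).erase
          (‖w‖)) (by
        intro x hx
        have hx' : x ∈ rest.map (fun z => ‖z‖) := Multiset.mem_of_mem_erase hx
        obtain ⟨v, hv, rfl⟩ := Multiset.mem_map.mp hx'
        obtain ⟨_, hvlt⟩ := hrestmem v hv
        exact ⟨norm_nonneg v, le_trans (le_of_lt hvlt) hle'⟩)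
      have : P < 1 := by
        rw [hP']
        calc ‖w‖ * _ ≤ ‖w‖ * 1 := by
              apply mul_le_mul_of_nonneg_left hle'' (norm_nonneg w)
          _ < 1 := by simpa using hwlt
      linarith
    have hd2 : L.d = 2 := by
      have hcard : M.card = L.d := by
        rw [hM, ← L.charPoly_natDegree]
        exact Polynomial.splits_iff_card_roots.mp hsplits
      rw [hMeq, hrest0] at hcard
      simpa using hcard.symm
    -- Now work with the explicit quadratic
    have heval : ∀ z : ℂ, L.IsCharRoot z → z ^ 2 = (L.c 1 : ℂ) * z + (L.c 2 : ℂ) := by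
      intro z hz
      have h := hz
      unfold IntLRS.IsCharRoot Polynomial.IsRoot at h
      rw [L.charPoly_eval, hd2] at h
      have hIcc : Finset.Icc 1 2 = ({1, 2} : Finset ℕ) := by decide
      rw [hIcc, Finset.sum_insert (by decide), Finset.sum_singleton] at h
      norm_num at h
      linear_combination h
    have h1 := heval lam₁ hroot1
    have h2 := heval lam₂ hroot2
    have hsubne : lam₁ - lam₂ ≠ 0 := sub_ne_zero.mpr hne
    have hc1 : (lam₁ - lam₂) * (L.c 1 : ℂ) = (lam₁ - lam₂) * (lam₁ + lam₂) := by
      linear_combination h2 - h1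
    have hc1' : (L.c 1 : ℂ) = lam₁ + lam₂ := mul_left_cancel₀ hsubne hc1
    have hnsq : Complex.normSq lam₁ = 1 := by
      have h := Complex.sq_norm lam₁
      rw [hr1] at h
      linarith [h.symm]
    have hmul : lam₁ * lam₂ = 1 := by
      rw [hca, Complex.mul_conj, hnsq]
      norm_num
    have hc2 : (L.c 2 : ℂ) = -1 := by
      linear_combination -h1 - lam₁ * hc1' - hmul
    have him : lam₁.im ≠ 0 := by
      intro h
      apply hne
      rw [hca]
      exact (Complex.conj_eq_iff_im.mpr h).symm
    have hre2 : lam₁.re ^ 2 < 1 := by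
      have h' : lam₁.re ^ 2 + lam₁.im ^ 2 = 1 := by
        rw [Complex.normSq_apply] at hnsq
        nlinarith [hnsq]
      have him2 : 0 < lam₁.im ^ 2 :=
        lt_of_le_of_ne (sq_nonneg _) (Ne.symm (pow_ne_zero 2 him))
      linarith
    have hcre : (L.c 1 : ℝ) = 2 * lam₁.re := by
      have h := congrArg Complex.re (hc1'.trans (by rw [hca, Complex.add_conj]))
      simpa using h
    have hc1b : L.c 1 = -1 ∨ L.c 1 = 0 ∨ L.c 1 = 1 := by
      have hlt : (L.c 1 : ℝ) < 2 := by
        rw [hcre]; nlinarith [hre2, sq_nonneg (lam₁.re - 1)]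
      have hgt : (-2 : ℝ) < (L.c 1 : ℝ) := by
        rw [hcre]; nlinarith [hre2, sq_nonneg (lam₁.re + 1)]
      have hib1 : (-2 : ℤ) < L.c 1 := by exact_mod_cast hgt
      have hib2 : L.c 1 < (2 : ℤ) := by exact_mod_cast hlt
      omega
    have hquad : lam₁ ^ 2 = (L.c 1 : ℂ) * lam₁ - 1 := by
      linear_combination h1 + hc2
    have h12 : lam₁ ^ 12 = 1 := by
      rcases hc1b with h | h | h <;> rw [h] at hquad <;> push_cast at hquad
      · have h3 : lam₁ ^ 3 = 1 := by linear_combination (lam₁ - 1) * hquad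
        linear_combination (lam₁ ^ 9 + lam₁ ^ 6 + lam₁ ^ 3 + 1) * h3
      · have hsq' : lam₁ ^ 2 = -1 := by linear_combination hquad
        linear_combination (lam₁ ^ 10 - lam₁ ^ 8 + lam₁ ^ 6 - lam₁ ^ 4 + lam₁ ^ 2 - 1) * hsq'
      · have h3 : lam₁ ^ 3 = -1 := by linear_combination (lam₁ + 1) * hquad
        linear_combination (lam₁ ^ 9 - lam₁ ^ 6 + lam₁ ^ 3 - 1) * h3
    have hratio2 : lam₁ / lam₂ = lam₁ ^ 2 := by
      rw [div_eq_iff hne2]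
      linear_combination (-lam₁) * hmul
    have hfin : (lam₁ / lam₂) ^ 6 = 1 := by
      rw [hratio2, ← pow_mul]
      exact h12
    exact hnondeg lam₁ lam₂ hroot1 hroot2 hne 6 (by norm_num) hfin
end

section
/- Let λ, θ be as in the normalized dominant part of a non-degenerate, simple integer linear recurrence sequence with two dominant roots. Then for every integer d ≥ 1 and every real η with 0 < η < √|λ|, there is exactly one x ∈ (−π/2, π/2] satisfying |λ|^d·cos(x + dθ) = η·cos(x), and this x lies in the open interval (−π/2, π/2). -/
/-- With `λ, θ` as in the normalized dominant part (so `λ` is algebraic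
with `|λ| > 1` and `λ = |λ|e^{iθ}`, `θ` not a rational multiple of `π`), for every
integer `d ≥ 1` and every real `0 < η < √|λ|` there is exactly one `x ∈ (-π/2, π/2]`
with `|λ|^d·cos(x + dθ) = η·cos x`, and this `x` lies in the open interval
`(-π/2, π/2)`. -/
theorem stmt_13 (lam : ℂ) (θ : ℝ)
    (halg : IsAlgebraic ℚ lam) (habs : 1 < ‖lam‖)
    (hθ : lam = (‖lam‖ : ℂ) * Complex.exp (θ * Complex.I))
    (hirr : ∀ q : ℚ, θ ≠ (q : ℝ) * Real.pi) :
    ∀ (d : ℕ), 1 ≤ d → ∀ η : ℝ, 0 < η → η < Real.sqrt (‖lam‖) →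
      (∃! x : ℝ, x ∈ Set.Ioc (-(Real.pi / 2)) (Real.pi / 2) ∧
        ‖lam‖ ^ d * Real.cos (x + d * θ) = η * Real.cos x) ∧
      (∀ x : ℝ, x ∈ Set.Ioc (-(Real.pi / 2)) (Real.pi / 2) →
        ‖lam‖ ^ d * Real.cos (x + d * θ) = η * Real.cos x →
        x ∈ Set.Ioo (-(Real.pi / 2)) (Real.pi / 2)) := by
  intro d hd η hη _
  set L : ℝ := ‖lam‖ with hLdef
  have hL : 1 < L := habs
  have hLd : (0:ℝ) < L ^ d := pow_pos (lt_trans one_pos hL) d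
  have hsin : Real.sin (d * θ) ≠ 0 := by
    intro h
    rcases Real.sin_eq_zero_iff.mp h with ⟨k, hk⟩
    apply hirr ((k : ℚ) / (d : ℚ))
    have hd0 : (d:ℝ) ≠ 0 := Nat.cast_ne_zero.mpr (by omega)
    push_cast
    field_simp
    linarith [hk]
  have hden : L ^ d * Real.sin (d * θ) ≠ 0 := mul_ne_zero hLd.ne' hsin
  set c : ℝ := (L ^ d * Real.cos (d * θ) - η) / (L ^ d * Real.sin (d * θ)) with hc
  -- key equivalence on the open interval
  have key : ∀ x : ℝ, Real.cos x ≠ 0 →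
      (L ^ d * Real.cos (x + d * θ) = η * Real.cos x ↔ Real.tan x = c) := by
    intro x hcx
    rw [Real.cos_add, Real.tan_eq_sin_div_cos, hc, div_eq_div_iff hcx hden]
    constructor <;> intro h <;> nlinarith [h]
  -- any solution in the half-open interval lies in the open interval
  have hIoo : ∀ x : ℝ, x ∈ Set.Ioc (-(Real.pi / 2)) (Real.pi / 2) →
      L ^ d * Real.cos (x + d * θ) = η * Real.cos x →
      x ∈ Set.Ioo (-(Real.pi / 2)) (Real.pi / 2) := by
    intro x hx heq
    rcases lt_or_eq_of_le hx.2 with h' | h'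
    · exact ⟨hx.1, h'⟩
    · exfalso
      subst h'
      rw [Real.cos_pi_div_two, mul_zero, Real.cos_add, Real.cos_pi_div_two,
        Real.sin_pi_div_two, zero_mul, one_mul, zero_sub, mul_neg] at heq
      exact hsin (by nlinarith [heq])
  refine ⟨⟨Real.arctan c, ?_, ?_⟩, hIoo⟩
  · have hmem := Real.arctan_mem_Ioo c
    have hcos : Real.cos (Real.arctan c) ≠ 0 :=
      (Real.cos_pos_of_mem_Ioo hmem).ne'
    exact ⟨⟨hmem.1, le_of_lt hmem.2⟩, (key _ hcos).mpr (Real.tan_arctan c)⟩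
  · rintro y ⟨hy, hyeq⟩
    have hy' : y ∈ Set.Ioo (-(Real.pi / 2)) (Real.pi / 2) := hIoo y hy hyeq
    have hcos : Real.cos y ≠ 0 := (Real.cos_pos_of_mem_Ioo hy').ne'
    have : Real.tan y = c := (key y hcos).mp hyeq
    rw [← Real.tan_arctan c] at this
    exact Real.injOn_tan hy' (Real.arctan_mem_Ioo c) this
end

section
/- Let u : ℕ → ℤ be defined by u₀ = 2, u₁ = 4, u₂ = 7 and u_{n+3} = 6·u_{n+2} − 13·u_{n+1} + 10·u_n for all n ∈ ℕ. Then the sets {n ∈ ℕ : u_n > 0} and {n ∈ ℕ : u_n < 0} are both infinite. -/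
open Real

private def aseq : ℕ → ℤ
  | 0 => 1
  | 1 => 2
  | (n + 2) => 4 * aseq (n + 1) - 5 * aseq n

private lemma aseq_cos (n : ℕ) :
    (aseq n : ℝ) = (Real.sqrt 5) ^ n * Real.cos (n * Real.arctan (1/2)) := by
  have hs : Real.sqrt 5 ^ 2 = 5 := Real.sq_sqrt (by norm_num)
  have hsne : Real.sqrt 5 ≠ 0 := by positivity
  have hcos2 : Real.sqrt 5 * Real.cos (Real.arctan (1/2)) = 2 := by
    have h4 : Real.sqrt 4 = 2 := by
      rw [show (4:ℝ) = 2^2 by norm_num]; exact Real.sqrt_sq (by norm_num)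
    rw [Real.cos_arctan, show (1:ℝ)+(1/2)^2 = 5/4 by norm_num,
      Real.sqrt_div (by norm_num : (0:ℝ) ≤ 5), h4]
    field_simp
  induction n using Nat.strong_induction_on with
  | _ n ih =>
    match n with
    | 0 => simp [aseq]
    | 1 =>
      simp only [aseq, Nat.cast_one, pow_one, one_mul, Int.cast_ofNat]
      linear_combination -hcos2
    | (m + 2) =>
      set θ := Real.arctan (1/2) with hθdef
      have key : Real.cos (((m:ℝ) + 2) * θ)
          = 2 * Real.cos θ * Real.cos (((m:ℝ) + 1) * θ) - Real.cos ((m:ℝ) * θ) := by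
        have h1 : ((m:ℝ) + 2) * θ = (((m:ℝ) + 1) * θ) + θ := by ring
        have h2 : (m:ℝ) * θ = (((m:ℝ) + 1) * θ) - θ := by ring
        rw [h1, h2, Real.cos_add, Real.cos_sub]; ring
      have e1 := ih (m + 1) (by omega)
      have e0 := ih m (by omega)
      show ((4 * aseq (m + 1) - 5 * aseq m : ℤ) : ℝ) = _
      push_cast [e1, e0]
      rw [key]
      linear_combination (Real.sqrt 5 ^ m * Real.cos ((m:ℝ) * θ)) * hs
        - 2 * Real.sqrt 5 ^ (m+1) * Real.cos (((m:ℝ)+1) * θ) * hcos2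

private lemma hits (θ : ℝ) (hθ0 : 0 < θ) (hθ : θ ≤ 2*π/3) (c : ℝ) (M : ℕ) :
    ∃ n : ℕ, M < n ∧ ∃ k : ℤ, 2*π*k + c ≤ (n:ℝ)*θ ∧ (n:ℝ)*θ ≤ 2*π*k + c + 2*π/3 := by
  have hπ : 0 < π := Real.pi_pos
  set k : ℤ := ⌈(((M:ℝ)+1)*θ - c)/(2*π)⌉ with hk
  have hkc : (((M:ℝ)+1)*θ - c)/(2*π) ≤ (k:ℝ) := Int.le_ceil _
  have ht : ((M:ℝ)+1)*θ ≤ 2*π*k + c := by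
    have := (div_le_iff₀ (by positivity : (0:ℝ) < 2*π)).mp hkc
    linarith
  set t : ℝ := 2*π*k + c with htdef
  have ht0 : 0 < t := lt_of_lt_of_le (by positivity) ht
  have hc0 : (0:ℤ) ≤ ⌈t/θ⌉ := (Int.ceil_pos.mpr (div_pos ht0 hθ0)).le
  set n : ℕ := ⌈t/θ⌉.toNat with hn
  have hcast : ((n:ℕ) : ℝ) = ((⌈t/θ⌉ : ℤ) : ℝ) := by
    rw [hn]; exact_mod_cast congrArg (fun z : ℤ => (z:ℝ)) (Int.toNat_of_nonneg hc0)
  have hθne : θ ≠ 0 := ne_of_gt hθ0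
  have hn1 : t ≤ (n:ℝ)*θ := by
    have : t/θ ≤ (n:ℝ) := by rw [hcast]; exact Int.le_ceil _
    calc t = (t/θ)*θ := by field_simp
    _ ≤ (n:ℝ)*θ := mul_le_mul_of_nonneg_right this hθ0.le
  have hn2 : (n:ℝ)*θ < t + θ := by
    have h2 : (n:ℝ) < t/θ + 1 := by rw [hcast]; exact Int.ceil_lt_add_one _
    have := mul_lt_mul_of_pos_right h2 hθ0
    calc (n:ℝ)*θ < (t/θ + 1)*θ := this
    _ = t + θ := by field_simp
  refine ⟨n, ?_, k, hn1, by linarith⟩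
  have : ((M:ℝ)+1)*θ ≤ (n:ℝ)*θ := le_trans ht hn1
  have hMn : ((M:ℝ)+1) ≤ (n:ℝ) := le_of_mul_le_mul_right this hθ0
  exact_mod_cast show ((M:ℝ)+1) ≤ (n:ℝ) from hMn

private lemma cos_neg_arc {x : ℝ} (k : ℤ) (h1 : 2*π*k + 2*π/3 ≤ x)
    (h2 : x ≤ 2*π*k + 2*π/3 + 2*π/3) : Real.cos x ≤ -(1/2) := by
  have hπ : 0 < π := Real.pi_pos
  have hx : Real.cos x = Real.cos (x - k*(2*π)) := by
    rw [← Real.cos_add_int_mul_two_pi (x - k*(2*π)) k]; ring_nf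
  set y := x - k*(2*π) with hy
  have hy1 : 2*π/3 ≤ y := by rw [hy]; linarith
  have hy2 : y ≤ 4*π/3 := by rw [hy]; linarith
  have hsub := Real.cos_sub_pi y
  have habs : Real.cos (y - π) = Real.cos |y - π| := (Real.cos_abs _).symm
  have hle : |y - π| ≤ π/3 := abs_le.mpr ⟨by linarith, by linarith⟩
  have hmono : Real.cos (π/3) ≤ Real.cos |y - π| :=
    Real.cos_le_cos_of_nonneg_of_le_pi (abs_nonneg _) (by linarith) hle
  rw [Real.cos_pi_div_three] at hmono
  rw [hx]
  linarith [hsub, habs ▸ hmono]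

private lemma cos_pos_arc {x : ℝ} (k : ℤ) (h1 : 2*π*k + -(π/3) ≤ x)
    (h2 : x ≤ 2*π*k + -(π/3) + 2*π/3) : (1/2:ℝ) ≤ Real.cos x := by
  have hπ : 0 < π := Real.pi_pos
  have hx : Real.cos x = Real.cos (x - k*(2*π)) := by
    rw [← Real.cos_add_int_mul_two_pi (x - k*(2*π)) k]; ring_nf
  set y := x - k*(2*π) with hy
  have hy1 : -(π/3) ≤ y := by rw [hy]; linarith
  have hy2 : y ≤ π/3 := by rw [hy]; linarith
  have habs : Real.cos y = Real.cos |y| := (Real.cos_abs _).symm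
  have hle : |y| ≤ π/3 := abs_le.mpr ⟨by linarith, by linarith⟩
  have hmono : Real.cos (π/3) ≤ Real.cos |y| :=
    Real.cos_le_cos_of_nonneg_of_le_pi (abs_nonneg _) (by linarith) hle
  rw [Real.cos_pi_div_three] at hmono
  rw [hx, habs]
  exact hmono

private lemma pow45 (n : ℕ) (hn : 7 ≤ n) : (4:ℝ)^(n+1) < 5^n := by
  induction n, hn using Nat.le_induction with
  | base => norm_num
  | succ n hn ih =>
    have h5 : (0:ℝ) < 5^n := by positivity
    calc (4:ℝ)^(n+1+1) = 4 * 4^(n+1) := by ring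
    _ < 4 * 5^n := by linarith
    _ < 5^(n+1) := by rw [pow_succ]; linarith

private lemma sqrt5_gt (n : ℕ) (hn : 7 ≤ n) : (2:ℝ)^(n+1) < (Real.sqrt 5)^n := by
  have hs : Real.sqrt 5 ^ 2 = 5 := Real.sq_sqrt (by norm_num)
  have hb : (0:ℝ) ≤ (Real.sqrt 5)^n := by positivity
  have hsq : ((2:ℝ)^(n+1))^2 < ((Real.sqrt 5)^n)^2 := by
    have e1 : ((2:ℝ)^(n+1))^2 = 4^(n+1) := by
      rw [← pow_mul, pow_mul']; norm_num
    have e2 : ((Real.sqrt 5)^n)^2 = 5^n := by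
      rw [← pow_mul, pow_mul', hs]
    rw [e1, e2]; exact pow45 n hn
  exact lt_of_pow_lt_pow_left₀ 2 hb hsq

/-- For the integer sequence with `u₀ = 2`, `u₁ = 4`, `u₂ = 7` and
`u_{n+3} = 6u_{n+2} - 13u_{n+1} + 10u_n`, the sets of indices where `u_n > 0` and where
`u_n < 0` are both infinite. -/
theorem stmt_16 (u : ℕ → ℤ) (h0 : u 0 = 2) (h1 : u 1 = 4) (h2 : u 2 = 7)
    (hrec : ∀ n : ℕ, u (n + 3) = 6 * u (n + 2) - 13 * u (n + 1) + 10 * u n) :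
    {n : ℕ | 0 < u n}.Infinite ∧ {n : ℕ | u n < 0}.Infinite := by
  have hu : ∀ n, u n = 2^n + aseq n := by
    intro n
    induction n using Nat.strong_induction_on with
    | _ n ih =>
      match n with
      | 0 => simp [h0, aseq]
      | 1 => simp [h1, aseq]
      | 2 => show u 2 = 2^2 + aseq 2; rw [h2]; rfl
      | (m + 3) =>
        have e0 := ih m (by omega)
        have e1 := ih (m+1) (by omega)
        have e2 := ih (m+2) (by omega)
        rw [hrec m, e0, e1, e2]
        show _ = 2^(m+3) + (4 * aseq (m + 2) - 5 * aseq (m + 1))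
        have ha : aseq (m+2) = 4 * aseq (m+1) - 5 * aseq m := rfl
        linear_combination 2 * ha
  set θ := Real.arctan (1/2) with hθdef
  have hθ0 : 0 < θ := by rw [hθdef, ← Real.arctan_zero]; exact Real.arctan_strictMono (by norm_num)
  have hθ23 : θ ≤ 2*π/3 := by
    have ha := Real.arctan_lt_pi_div_two (1/2)
    have := Real.pi_pos
    rw [hθdef]; linarith
  constructor
  · apply Set.infinite_of_not_bddAbove
    rintro ⟨M, hM⟩
    obtain ⟨n, hMn, k, hk1, hk2⟩ := hits θ hθ0 hθ23 (-(π/3)) M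
    have hcos := cos_pos_arc k hk1 hk2
    have haR : (aseq n : ℝ) = (Real.sqrt 5)^n * Real.cos ((n:ℝ)*θ) := by
      rw [hθdef]; exact aseq_cos n
    have hp : (0:ℝ) ≤ (Real.sqrt 5)^n := by positivity
    have ha0 : (0:ℝ) ≤ (aseq n : ℝ) := by
      rw [haR]; exact mul_nonneg hp (by linarith)
    have ha0' : (0:ℤ) ≤ aseq n := by exact_mod_cast ha0
    have hpos : 0 < u n := by
      rw [hu n]
      have : (0:ℤ) < 2^n := by positivity
      linarith
    have := hM (show n ∈ {n : ℕ | 0 < u n} from hpos)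
    omega
  · apply Set.infinite_of_not_bddAbove
    rintro ⟨M, hM⟩
    obtain ⟨n, hMn, k, hk1, hk2⟩ := hits θ hθ0 hθ23 (2*π/3) (max M 7)
    have hn7 : 7 ≤ n := lt_of_le_of_lt (le_max_right M 7) hMn |>.le
    have hcos := cos_neg_arc k hk1 hk2
    have haR : (aseq n : ℝ) = (Real.sqrt 5)^n * Real.cos ((n:ℝ)*θ) := by
      rw [hθdef]; exact aseq_cos n
    have hp : (0:ℝ) ≤ (Real.sqrt 5)^n := by positivity
    have hgt := sqrt5_gt n hn7
    have hub : (aseq n : ℝ) ≤ -(1/2) * (Real.sqrt 5)^n := by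
      rw [haR]
      nlinarith [mul_le_mul_of_nonneg_left hcos hp]
    have huR : ((u n : ℤ) : ℝ) < 0 := by
      rw [hu n]; push_cast
      have h2n : (2:ℝ)^(n+1) = 2 * 2^n := by ring
      nlinarith
    have hneg : u n < 0 := by exact_mod_cast huR
    have := hM (show n ∈ {n : ℕ | u n < 0} from hneg)
    omega
end
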